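/- If a graph G has an interval t-coloring (for any t), then G admits a proper edge coloring with exactly Δ(G) colors, i.e., χ'(G) = Δ(G). -/

import Mathlib

/-- The set of colors appearing on edges incident to `v` under edge coloring `c`. -/
def colorsAt {V : Type*} (G : SimpleGraph V) (c : Sym2 V → ℕ) (v : V) : Set ℕ :=
  {i | ∃ e ∈ G.edgeSet, v ∈ e ∧ c e = i}

/-- A set of naturals is an interval of consecutive integers. -/
def IsIntervalSet (S : Set ℕ) : Prop :=
  ∀ i j k, i ∈ S → j ∈ S → i ≤ k → k ≤ j → k ∈ S

/-- `c` is a proper edge coloring of `G`: distinct edges sharing a vertex get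
different colors. -/
def IsProperEdgeColoring {V : Type*} (G : SimpleGraph V) (c : Sym2 V → ℕ) : Prop :=
  ∀ e₁ ∈ G.edgeSet, ∀ e₂ ∈ G.edgeSet, e₁ ≠ e₂ → (∃ v, v ∈ e₁ ∧ v ∈ e₂) → c e₁ ≠ c e₂

/-- An interval `t`-coloring: proper edge coloring with colors `1,…,t`, every color
used, and the colors at each vertex forming an interval of consecutive integers. -/
def IsIntervalColoring {V : Type*} (G : SimpleGraph V) (t : ℕ) (c : Sym2 V → ℕ) : Prop :=
  IsProperEdgeColoring G c ∧
  (∀ e ∈ G.edgeSet, c e ∈ Set.Icc 1 t) ∧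
  (∀ i ∈ Set.Icc 1 t, ∃ e ∈ G.edgeSet, c e = i) ∧
  (∀ v, IsIntervalSet (colorsAt G c v))

/-- A cyclic interval `t`-coloring: proper edge coloring with colors `1,…,t`, every
color used, and for each vertex the set of colors at it, or its complement in
`{1,…,t}`, is an interval of consecutive integers. -/
def IsCyclicIntervalColoring {V : Type*} (G : SimpleGraph V) (t : ℕ) (c : Sym2 V → ℕ) : Prop :=
  IsProperEdgeColoring G c ∧
  (∀ e ∈ G.edgeSet, c e ∈ Set.Icc 1 t) ∧
  (∀ i ∈ Set.Icc 1 t, ∃ e ∈ G.edgeSet, c e = i) ∧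
  (∀ v, IsIntervalSet (colorsAt G c v) ∨ IsIntervalSet (Set.Icc 1 t \ colorsAt G c v))

/-- If `G` has an interval `t`-coloring for some `t`, then `G` admits a proper edge
coloring with exactly `Δ(G)` colors, i.e. `χ'(G) = Δ(G)`. -/
theorem stmt2 {V : Type*} [Fintype V] [DecidableEq V] (G : SimpleGraph V)
    [DecidableRel G.Adj]
    (h : ∃ (t : ℕ) (c : Sym2 V → ℕ), IsIntervalColoring G t c) :
    ∃ C : G.edgeSet → Fin G.maxDegree,
      ∀ e₁ e₂ : G.edgeSet, e₁ ≠ e₂ →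
        (∃ v : V, v ∈ (e₁ : Sym2 V) ∧ v ∈ (e₂ : Sym2 V)) → C e₁ ≠ C e₂ := by
  classical
  obtain ⟨t, c, hproper, hrange, hused, hint⟩ := h
  -- key: distance between two colors at a vertex is less than maxDegree
  have hdeg : ∀ v : V, ∀ a b : ℕ, a ∈ colorsAt G c v → b ∈ colorsAt G c v → a ≤ b →
      b - a < G.degree v := by
    intro v a b ha hb hab
    have hS : ∀ i ∈ Finset.Icc a b, i ∈ colorsAt G c v := by
      intro i hi
      simp only [Finset.mem_Icc] at hi
      exact hint v a b i ha hb hi.1 hi.2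
    have hcard : (Finset.Icc a b).card ≤ (G.incidenceFinset v).card := by
      apply Finset.card_le_card_of_injOn
        (fun i => if h : i ∈ colorsAt G c v then h.choose else s(v, v))
      · intro i hi
        have h := hS i hi
        simp only [dif_pos h]
        obtain ⟨he, hv, hc⟩ := h.choose_spec
        rw [Finset.mem_coe, SimpleGraph.mem_incidenceFinset]
        exact ⟨he, hv⟩
      · intro i hi j hj hij
        have hi' := hS i hi; have hj' := hS j hj
        simp only [dif_pos hi', dif_pos hj'] at hij
        have h1 := hi'.choose_spec.2.2
        have h2 := hj'.choose_spec.2.2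
        rw [← h1, ← h2, hij]
    rw [Nat.card_Icc, SimpleGraph.card_incidenceFinset_eq_degree] at hcard
    omega
  by_cases hpos : 0 < G.maxDegree
  · refine ⟨fun e => ⟨(c e.1 - 1) % G.maxDegree, Nat.mod_lt _ hpos⟩, ?_⟩
    rintro e₁ e₂ hne ⟨v, hv1, hv2⟩ hCeq
    have hne' : (e₁ : Sym2 V) ≠ (e₂ : Sym2 V) := fun hh => hne (Subtype.ext hh)
    have hcne : c e₁.1 ≠ c e₂.1 := hproper e₁.1 e₁.2 e₂.1 e₂.2 hne' ⟨v, hv1, hv2⟩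
    have h1 : c e₁.1 ∈ colorsAt G c v := ⟨e₁.1, e₁.2, hv1, rfl⟩
    have h2 : c e₂.1 ∈ colorsAt G c v := ⟨e₂.1, e₂.2, hv2, rfl⟩
    have hg1 : 1 ≤ c e₁.1 := (hrange e₁.1 e₁.2).1
    have hg2 : 1 ≤ c e₂.1 := (hrange e₂.1 e₂.2).1
    have hmod : (c e₁.1 - 1) % G.maxDegree = (c e₂.1 - 1) % G.maxDegree :=
      congrArg Fin.val hCeq
    have hdle : G.degree v ≤ G.maxDegree := G.degree_le_maxDegree v
    rcases le_total (c e₁.1) (c e₂.1) with hle | hle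
    · have hlt := hdeg v _ _ h1 h2 hle
      have hdvd : G.maxDegree ∣ (c e₂.1 - 1) - (c e₁.1 - 1) :=
        (Nat.modEq_iff_dvd' (by omega)).mp hmod
      have := Nat.le_of_dvd (by omega) hdvd
      omega
    · have hlt := hdeg v _ _ h2 h1 hle
      have hdvd : G.maxDegree ∣ (c e₁.1 - 1) - (c e₂.1 - 1) :=
        (Nat.modEq_iff_dvd' (by omega)).mp hmod.symm
      have := Nat.le_of_dvd (by omega) hdvd
      omega
  · have hE : IsEmpty G.edgeSet := by
      constructor
      rintro ⟨e, he⟩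
      induction e with
      | h a b =>
        have hadj : G.Adj a b := he
        have : 0 < G.degree a := G.degree_pos_iff_exists_adj a |>.mpr ⟨b, hadj⟩
        have := G.degree_le_maxDegree a
        omega
    exact ⟨fun e => isEmptyElim e, fun e => isEmptyElim e⟩
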